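/- Let ℓ1 and ℓ3 be two distinct parallel lines and ℓ2, ℓ4 two distinct lines perpendicular to them, bounding a square Q with medial square Q' (vertices at edge midpoints of Q). Let ri ∈ ℓi for i = 1,2,3,4, let pi be the vertex of Q' on ℓi, and suppose the pathway of r2 (segment r2 p2) intersects the segment r1 r3. Then the pathway of r4 (segment r4 p4) does not intersect the segment r1 r3. (Two opposite robots cannot both be blocked.) -/

import Mathlib

open EuclideanGeometry Real
open scoped RealInnerProductSpace

noncomputable section

abbrev Pt := EuclideanSpace ℝ (Fin 2)

/-- Cross product of two planar vectors. -/
def cross2 (u v : Pt) : ℝ := u 0 * v 1 - u 1 * v 0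

/-- Rotation of a planar vector by 90 degrees counterclockwise. -/
def rot90 (v : Pt) : Pt := WithLp.toLp 2 ![-(v 1), v 0]

/-- The line through `a` with direction vector `d`. -/
def lineDir (a d : Pt) : Set Pt := {p | cross2 (p - a) d = 0}

/-- The line through two points, as a set. -/
def lineThru (a b : Pt) : Set Pt := (affineSpan ℝ {a, b} : Set Pt)

/-- Strictly convex position in the given cyclic order. -/
def Convex4 (a b c d : Pt) : Prop :=
  (0 < cross2 (b-a) (c-b) ∧ 0 < cross2 (c-b) (d-c) ∧ 0 < cross2 (d-c) (a-d) ∧ 0 < cross2 (a-d) (b-a)) ∨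
  (cross2 (b-a) (c-b) < 0 ∧ cross2 (c-b) (d-c) < 0 ∧ cross2 (d-c) (a-d) < 0 ∧ cross2 (a-d) (b-a) < 0)

/-- `a b c d` in clockwise order: every consecutive triple has negative orientation. -/
def Clockwise4 (a b c d : Pt) : Prop :=
  cross2 (b-a) (c-b) < 0 ∧ cross2 (c-b) (d-c) < 0 ∧ cross2 (d-c) (a-d) < 0 ∧ cross2 (a-d) (b-a) < 0

/-- A (nondegenerate) square: four equal sides and four right angles. -/
def IsSquare4 (a b c d : Pt) : Prop :=
  a ≠ b ∧ dist a b = dist b c ∧ dist b c = dist c d ∧ dist c d = dist d a ∧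
  inner ℝ (b - a) (d - a) = (0:ℝ) ∧ inner ℝ (a - b) (c - b) = (0:ℝ) ∧
  inner ℝ (b - c) (d - c) = (0:ℝ) ∧ inner ℝ (c - d) (a - d) = (0:ℝ)

/-- `q` is the auxiliary point of the target-square construction for `r1 r2 r3 r4`:
`dist r1 q = dist r2 r4`, the lines `r1 q` and `r2 r4` are orthogonal, and the ray
from `r1` through `q` intersects the line `r2 r4`. -/
def IsQPoint (r1 r2 r3 r4 q : Pt) : Prop :=
  dist r1 q = dist r2 r4 ∧ inner ℝ (q - r1) (r4 - r2) = (0:ℝ) ∧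
  ∃ t : ℝ, 0 ≤ t ∧ r1 + t • (q - r1) ∈ lineDir r2 (r4 - r2)

set_option maxHeartbeats 1000000


private lemma sq2_zero {a b : ℝ} (h : a^2 + b^2 ≤ 0) : a = 0 ∧ b = 0 := by
  have ha : a^2 = 0 := le_antisymm (by nlinarith [sq_nonneg b]) (sq_nonneg a)
  have hb : b^2 = 0 := le_antisymm (by nlinarith [sq_nonneg a]) (sq_nonneg b)
  exact ⟨pow_eq_zero_iff (by norm_num : 2 ≠ 0) |>.mp ha,
         pow_eq_zero_iff (by norm_num : 2 ≠ 0) |>.mp hb⟩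

private lemma seg_prod {c p s : ℝ} (hs0 : 0 ≤ s) (hs1 : s ≤ 1)
    (h : (1-s)*c + s*p = 0) : c*p ≤ 0 := by
  have hid : c*p = -((1-s)*c^2 + s*p^2) := by linear_combination (c+p)*h
  nlinarith [mul_nonneg (sub_nonneg.2 hs1) (sq_nonneg c), mul_nonneg hs0 (sq_nonneg p)]

private lemma pos_of_neg_mul {a b : ℝ} (ha : a < 0) (h : a*b ≤ 0) : 0 ≤ b := by nlinarith
private lemma neg_of_pos_mul {a b : ℝ} (ha : 0 < a) (h : a*b ≤ 0) : b ≤ 0 := by nlinarith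
private lemma scale_nonneg {d c v : ℝ} (h : 2*d*c = v) (hd : 0 < d) (hc : 0 ≤ c) : 0 ≤ v := by nlinarith
private lemma scale_nonpos {d c v : ℝ} (h : 2*d*c = v) (hd : 0 < d) (hc : c ≤ 0) : v ≤ 0 := by nlinarith
private lemma final_contra {a b v : ℝ} (h2 : 0 ≤ a) (h4 : b ≤ 0) (hv : 0 < v) (hd : a - b = -2*v) : False := by
  linarith

private lemma core
    (x1 y1 x2 y2 x3 y3 x4 y4 d0 d1 u0 u1 p2x p2y p4x p4y t s τ s' τ' ε : ℝ)
    (hu0 : u0 = d0 + (x3 - x1)) (hu1 : u1 = d1 + (y3 - y1))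
    (hε : ε = 1 ∨ ε = -1)
    (hw0 : x4 - x2 = -(ε * u1)) (hw1 : y4 - y2 = ε * u0)
    (ht : 0 ≤ t)
    (hray : (x1 + t * u0 - x2) * (y4 - y2) - (y1 + t * u1 - y2) * (x4 - x2) = 0)
    (hdiag : (x3 - x1) * (x4 - x2) + (y3 - y1) * (y4 - y2) ≠ 0)
    (hDd : 0 < d0 ^ 2 + d1 ^ 2)
    (hp2a : (2*p2x - x1 - x3) * d1 - (2*p2y - y1 - y3) * d0 = 0)
    (hp2b : (p2x - x2) * d0 + (p2y - y2) * d1 = 0)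
    (hp4a : (2*p4x - x1 - x3) * d1 - (2*p4y - y1 - y3) * d0 = 0)
    (hp4b : (p4x - x4) * d0 + (p4y - y4) * d1 = 0)
    (hs0 : 0 ≤ s) (hs1 : s ≤ 1)
    (hb2x : (1-s) * x2 + s * p2x = (1-τ) * x1 + τ * x3)
    (hb2y : (1-s) * y2 + s * p2y = (1-τ) * y1 + τ * y3)
    (hs0' : 0 ≤ s') (hs1' : s' ≤ 1)
    (hb4x : (1-s') * x4 + s' * p4x = (1-τ') * x1 + τ' * x3)
    (hb4y : (1-s') * y4 + s' * p4y = (1-τ') * y1 + τ' * y3)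
    (hconv : (0 < (x2-x1)*(y3-y2) - (y2-y1)*(x3-x2) ∧ 0 < (x3-x2)*(y4-y3) - (y3-y2)*(x4-x3) ∧
              0 < (x4-x3)*(y1-y4) - (y4-y3)*(x1-x4) ∧ 0 < (x1-x4)*(y2-y1) - (y1-y4)*(x2-x1)) ∨
             ((x2-x1)*(y3-y2) - (y2-y1)*(x3-x2) < 0 ∧ (x3-x2)*(y4-y3) - (y3-y2)*(x4-x3) < 0 ∧
              (x4-x3)*(y1-y4) - (y4-y3)*(x1-x4) < 0 ∧ (x1-x4)*(y2-y1) - (y1-y4)*(x2-x1) < 0)) :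
    False := by
  have hV : d0*(y3-y1) - d1*(x3-x1) ≠ 0 := by
    intro h0; apply hdiag
    linear_combination (x3-x1)*hw0 + (y3-y1)*hw1 + ε*h0 + ε*(y3-y1)*hu0 - ε*(x3-x1)*hu1
  have hV2 : 0 < (d0*(y3-y1) - d1*(x3-x1))^2 :=
    lt_of_le_of_ne (sq_nonneg _) (Ne.symm (pow_ne_zero 2 hV))
  have htS : 0 ≤ t * (u0^2 + u1^2) := mul_nonneg ht (by positivity)
  have hkey2 : (1-s)*((x3-x1)*(y2-y1) - (y3-y1)*(x2-x1))
      + s*((x3-x1)*(p2y-y1) - (y3-y1)*(p2x-x1)) = 0 := by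
    linear_combination (x3-x1)*hb2y - (y3-y1)*hb2x
  have hkey4 : (1-s')*((x3-x1)*(y4-y1) - (y3-y1)*(x4-x1))
      + s'*((x3-x1)*(p4y-y1) - (y3-y1)*(p4x-x1)) = 0 := by
    linear_combination (x3-x1)*hb4y - (y3-y1)*hb4x
  have hc2cp2 := seg_prod hs0 hs1 hkey2
  have hc4cp4 := seg_prod hs0' hs1' hkey4
  have hN2 : 2*(d0^2+d1^2)*((x3-x1)*(p2y-y1) - (y3-y1)*(p2x-x1))
      = (d0*(y3-y1) - d1*(x3-x1)) * ((x1+x3-2*x2)*d0 + (y1+y3-2*y2)*d1) := by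
    linear_combination (-((x3-x1)*d0 + (y3-y1)*d1)) * hp2a + (-2*(d0*(y3-y1) - d1*(x3-x1))) * hp2b
  have hN4 : 2*(d0^2+d1^2)*((x3-x1)*(p4y-y1) - (y3-y1)*(p4x-x1))
      = (d0*(y3-y1) - d1*(x3-x1)) * ((x1+x3-2*x4)*d0 + (y1+y3-2*y4)*d1) := by
    linear_combination (-((x3-x1)*d0 + (y3-y1)*d1)) * hp4a + (-2*(d0*(y3-y1) - d1*(x3-x1))) * hp4b
  have hN24 : (x4-x2)*d0 + (y4-y2)*d1 = -(ε*(d0*(y3-y1) - d1*(x3-x1))) := by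
    linear_combination d0*hw0 + d1*hw1 - ε*d0*hu1 + ε*d1*hu0
  have hP : (x1-x2)*u0 + (y1-y2)*u1 ≤ 0 := by
    rw [hw0, hw1] at hray
    rcases hε with h | h <;> subst h
    · have h' : (x1-x2)*u0 + (y1-y2)*u1 = -(t*(u0^2+u1^2)) := by linear_combination hray
      linarith [htS]
    · have h' : (x1-x2)*u0 + (y1-y2)*u1 = -(t*(u0^2+u1^2)) := by linear_combination -hray
      linarith [htS]
  have ho412 : (x1-x4)*(y2-y1) - (y1-y4)*(x2-x1) = -(ε*((x1-x2)*u0 + (y1-y2)*u1)) := by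
    linear_combination (-(y2-y1))*hw0 + (x2-x1)*hw1
  rcases hconv with ⟨h123, _, h341, h412⟩ | ⟨h123, _, h341, h412⟩ <;>
    rcases hε with h | h <;> subst h
  · -- σ = +, ε = 1 : V² contradiction
    have hc2 : ((x3-x1)*(y2-y1) - (y3-y1)*(x2-x1)) < 0 := by linarith [h123]
    have hc4 : 0 < ((x3-x1)*(y4-y1) - (y3-y1)*(x4-x1)) := by linarith [h341]
    have hVN2 := scale_nonneg hN2 hDd (pos_of_neg_mul hc2 hc2cp2)
    have hVN4 := scale_nonpos hN4 hDd (neg_of_pos_mul hc4 hc4cp4)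
    refine final_contra hVN2 hVN4 hV2 ?_
    linear_combination (2*(d0*(y3-y1) - d1*(x3-x1))) * hN24
  · -- σ = +, ε = -1 : ray contradiction
    have : (x1-x4)*(y2-y1) - (y1-y4)*(x2-x1) ≤ 0 := by rw [ho412]; linarith [hP]
    linarith [h412, this]
  · -- σ = -, ε = 1 : ray contradiction
    have : 0 ≤ (x1-x4)*(y2-y1) - (y1-y4)*(x2-x1) := by rw [ho412]; linarith [hP]
    linarith [h412, this]
  · -- σ = -, ε = -1 : V² contradiction
    have hc2 : 0 < ((x3-x1)*(y2-y1) - (y3-y1)*(x2-x1)) := by linarith [h123]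
    have hc4 : ((x3-x1)*(y4-y1) - (y3-y1)*(x4-x1)) < 0 := by linarith [h341]
    have hVN2 := scale_nonpos hN2 hDd (neg_of_pos_mul hc2 hc2cp2)
    have hVN4 := scale_nonneg hN4 hDd (pos_of_neg_mul hc4 hc4cp4)
    refine final_contra hVN4 hVN2 hV2 ?_
    linear_combination (-2*(d0*(y3-y1) - d1*(x3-x1))) * hN24

lemma inner_c (x y : Pt) : ⟪x, y⟫ = x 0 * y 0 + x 1 * y 1 := by
  simp [PiLp.inner_apply, Fin.sum_univ_two, RCLike.inner_apply, starRingEnd_apply]; ring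

lemma dist_sq (x y : Pt) : dist x y ^ 2 = (x 0 - y 0)^2 + (x 1 - y 1)^2 := by
  rw [EuclideanSpace.dist_eq, Real.sq_sqrt]
  · simp [Fin.sum_univ_two, Real.dist_eq, sq_abs]
  · apply Finset.sum_nonneg; intro i _; positivity

lemma mid_apply (x y : Pt) (i : Fin 2) : (midpoint ℝ x y) i = (x i + y i)/2 := by
  simp [midpoint_eq_smul_add]; ring

lemma seg_coords {a b z : Pt} (h : z ∈ segment ℝ a b) :
    ∃ t : ℝ, 0 ≤ t ∧ t ≤ 1 ∧ z 0 = (1-t)*a 0 + t*b 0 ∧ z 1 = (1-t)*a 1 + t*b 1 := by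
  obtain ⟨s, u, hs, hu, hsum, heq⟩ := h
  have h0 := congrArg (· 0) heq
  have h1 := congrArg (· 1) heq
  simp only at h0 h1
  refine ⟨u, hu, by linarith, ?_, ?_⟩
  · rw [← h0]; show s * a 0 + u * b 0 = _; have hs' : s = 1 - u := by linarith
    rw [hs']
  · rw [← h1]; show s * a 1 + u * b 1 = _; have hs' : s = 1 - u := by linarith
    rw [hs']

/-- Two opposite robots cannot both be blocked: if the pathway of `r2` meets the segment
`r1 r3`, the pathway of `r4` does not. -/
theorem stmt15
    (r1 r2 r3 r4 q a12 a23 a34 a41 : Pt)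
    (hconv : Convex4 r1 r2 r3 r4)
    (hdiag : inner ℝ (r3 - r1) (r4 - r2) ≠ (0:ℝ))
    (hq : IsQPoint r1 r2 r3 r4 q) (hq3 : q ≠ r3)
    (ha12 : a12 ∈ lineDir r1 (q - r3) ∩ lineDir r2 (rot90 (q - r3)))
    (ha23 : a23 ∈ lineDir r2 (rot90 (q - r3)) ∩ lineDir r3 (q - r3))
    (ha34 : a34 ∈ lineDir r3 (q - r3) ∩ lineDir r4 (rot90 (q - r3)))
    (ha41 : a41 ∈ lineDir r4 (rot90 (q - r3)) ∩ lineDir r1 (q - r3))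
    (p1 p2 p3 p4 : Pt)
    (hp1 : p1 = midpoint ℝ a41 a12) (hp2 : p2 = midpoint ℝ a12 a23)
    (hp3 : p3 = midpoint ℝ a23 a34) (hp4 : p4 = midpoint ℝ a34 a41)
    (hblocked2 : ((segment ℝ r2 p2) ∩ (segment ℝ r1 r3)).Nonempty) :
    ¬ ((segment ℝ r4 p4) ∩ (segment ℝ r1 r3)).Nonempty := by
  intro hb4
  obtain ⟨z2, hz2a, hz2b⟩ := hblocked2
  obtain ⟨z4, hz4a, hz4b⟩ := hb4
  obtain ⟨s2, hs20, hs21, hz2x, hz2y⟩ := seg_coords hz2a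
  obtain ⟨t2, ht20, ht21, hz2x', hz2y'⟩ := seg_coords hz2b
  obtain ⟨s4, hs40, hs41, hz4x, hz4y⟩ := seg_coords hz4a
  obtain ⟨t4, ht40, ht41, hz4x', hz4y'⟩ := seg_coords hz4b
  obtain ⟨hqd, hqi, t, ht0, htm⟩ := hq
  -- pathway-blocking equations
  have hb2x : (1-s2)*(r2 0) + s2*(p2 0) = (1-t2)*(r1 0) + t2*(r3 0) := hz2x.symm.trans hz2x'
  have hb2y : (1-s2)*(r2 1) + s2*(p2 1) = (1-t2)*(r1 1) + t2*(r3 1) := hz2y.symm.trans hz2y'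
  have hb4x : (1-s4)*(r4 0) + s4*(p4 0) = (1-t4)*(r1 0) + t4*(r3 0) := hz4x.symm.trans hz4x'
  have hb4y : (1-s4)*(r4 1) + s4*(p4 1) = (1-t4)*(r1 1) + t4*(r3 1) := hz4y.symm.trans hz4y'
  -- midpoint coordinates
  have hp20 : p2 0 = (a12 0 + a23 0)/2 := by rw [hp2]; exact mid_apply _ _ 0
  have hp21 : p2 1 = (a12 1 + a23 1)/2 := by rw [hp2]; exact mid_apply _ _ 1
  have hp40 : p4 0 = (a34 0 + a41 0)/2 := by rw [hp4]; exact mid_apply _ _ 0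
  have hp41 : p4 1 = (a34 1 + a41 1)/2 := by rw [hp4]; exact mid_apply _ _ 1
  -- line equations for the square corners
  have e12a : (a12 0 - r1 0) * (q 1 - r3 1) - (a12 1 - r1 1) * (q 0 - r3 0) = 0 := ha12.1
  have e12b : (a12 0 - r2 0) * (q 0 - r3 0) - (a12 1 - r2 1) * (-(q 1 - r3 1)) = 0 := ha12.2
  have e23a : (a23 0 - r2 0) * (q 0 - r3 0) - (a23 1 - r2 1) * (-(q 1 - r3 1)) = 0 := ha23.1
  have e23b : (a23 0 - r3 0) * (q 1 - r3 1) - (a23 1 - r3 1) * (q 0 - r3 0) = 0 := ha23.2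
  have e34a : (a34 0 - r3 0) * (q 1 - r3 1) - (a34 1 - r3 1) * (q 0 - r3 0) = 0 := ha34.1
  have e34b : (a34 0 - r4 0) * (q 0 - r3 0) - (a34 1 - r4 1) * (-(q 1 - r3 1)) = 0 := ha34.2
  have e41a : (a41 0 - r4 0) * (q 0 - r3 0) - (a41 1 - r4 1) * (-(q 1 - r3 1)) = 0 := ha41.1
  have e41b : (a41 0 - r1 0) * (q 1 - r3 1) - (a41 1 - r1 1) * (q 0 - r3 0) = 0 := ha41.2
  have hp2a : (2*(p2 0) - r1 0 - r3 0)*(q 1 - r3 1) - (2*(p2 1) - r1 1 - r3 1)*(q 0 - r3 0) = 0 := by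
    rw [hp20, hp21]; linear_combination e12a + e23b
  have hp2b : ((p2 0) - r2 0)*(q 0 - r3 0) + ((p2 1) - r2 1)*(q 1 - r3 1) = 0 := by
    rw [hp20, hp21]; linear_combination e12b/2 + e23a/2
  have hp4a : (2*(p4 0) - r1 0 - r3 0)*(q 1 - r3 1) - (2*(p4 1) - r1 1 - r3 1)*(q 0 - r3 0) = 0 := by
    rw [hp40, hp41]; linear_combination e34a + e41b
  have hp4b : ((p4 0) - r4 0)*(q 0 - r3 0) + ((p4 1) - r4 1)*(q 1 - r3 1) = 0 := by
    rw [hp40, hp41]; linear_combination e34b/2 + e41a/2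
  -- hypotheses from the Q-point
  have hdiagc : (r3 0 - r1 0)*(r4 0 - r2 0) + (r3 1 - r1 1)*(r4 1 - r2 1) ≠ 0 :=
    fun h => hdiag (by rw [inner_c]; exact h)
  have F1 : (q 0 - r1 0)*(r4 0 - r2 0) + (q 1 - r1 1)*(r4 1 - r2 1) = 0 := by
    have h := hqi; rw [inner_c] at h; exact h
  have hsq : (r1 0 - q 0)^2 + (r1 1 - q 1)^2 = (r2 0 - r4 0)^2 + (r2 1 - r4 1)^2 := by
    rw [← dist_sq, ← dist_sq, hqd]
  have hrayc : (r1 0 + t*(q 0 - r1 0) - r2 0)*(r4 1 - r2 1)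
      - (r1 1 + t*(q 1 - r1 1) - r2 1)*(r4 0 - r2 0) = 0 := htm
  have hDd : 0 < (q 0 - r3 0)^2 + (q 1 - r3 1)^2 := by
    rcases (by positivity : (0:ℝ) ≤ (q 0 - r3 0)^2 + (q 1 - r3 1)^2).lt_or_eq with h | h
    · exact h
    · exfalso
      obtain ⟨h0, h1⟩ := sq2_zero (le_of_eq h.symm)
      apply hq3; ext i; fin_cases i
      · show q 0 = r3 0; linarith
      · show q 1 = r3 1; linarith
  have hS0 : (0:ℝ) ≤ (q 0 - r1 0)^2 + (q 1 - r1 1)^2 := by positivity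
  rcases hS0.lt_or_eq with hS | hS
  · -- u ≠ 0
    have hX : ((q 0 - r1 0)*(r4 1 - r2 1) - (q 1 - r1 1)*(r4 0 - r2 0)
          - ((q 0 - r1 0)^2 + (q 1 - r1 1)^2))
        * ((q 0 - r1 0)*(r4 1 - r2 1) - (q 1 - r1 1)*(r4 0 - r2 0)
          + ((q 0 - r1 0)^2 + (q 1 - r1 1)^2)) = 0 := by
      linear_combination (-((q 0 - r1 0)*(r4 0 - r2 0) + (q 1 - r1 1)*(r4 1 - r2 1)))*F1
        - ((q 0 - r1 0)^2 + (q 1 - r1 1)^2)*hsq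
    rcases mul_eq_zero.mp hX with h | h
    · -- ε = 1
      have hw0 : r4 0 - r2 0 = -(q 1 - r1 1) :=
        mul_left_cancel₀ (ne_of_gt hS) (by linear_combination (q 0 - r1 0)*F1 - (q 1 - r1 1)*h)
      have hw1 : r4 1 - r2 1 = q 0 - r1 0 :=
        mul_left_cancel₀ (ne_of_gt hS) (by linear_combination (q 1 - r1 1)*F1 + (q 0 - r1 0)*h)
      exact core (r1 0) (r1 1) (r2 0) (r2 1) (r3 0) (r3 1) (r4 0) (r4 1)
        (q 0 - r3 0) (q 1 - r3 1) (q 0 - r1 0) (q 1 - r1 1) (p2 0) (p2 1) (p4 0) (p4 1)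
        t s2 t2 s4 t4 1 (by ring) (by ring) (Or.inl rfl)
        (by linear_combination hw0) (by linear_combination hw1)
        ht0 hrayc hdiagc hDd hp2a hp2b hp4a hp4b
        hs20 hs21 hb2x hb2y hs40 hs41 hb4x hb4y hconv
    · -- ε = -1
      have hw0 : r4 0 - r2 0 = q 1 - r1 1 :=
        mul_left_cancel₀ (ne_of_gt hS) (by linear_combination (q 0 - r1 0)*F1 - (q 1 - r1 1)*h)
      have hw1 : r4 1 - r2 1 = -(q 0 - r1 0) :=
        mul_left_cancel₀ (ne_of_gt hS) (by linear_combination (q 1 - r1 1)*F1 + (q 0 - r1 0)*h)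
      exact core (r1 0) (r1 1) (r2 0) (r2 1) (r3 0) (r3 1) (r4 0) (r4 1)
        (q 0 - r3 0) (q 1 - r3 1) (q 0 - r1 0) (q 1 - r1 1) (p2 0) (p2 1) (p4 0) (p4 1)
        t s2 t2 s4 t4 (-1) (by ring) (by ring) (Or.inr rfl)
        (by linear_combination hw0) (by linear_combination hw1)
        ht0 hrayc hdiagc hDd hp2a hp2b hp4a hp4b
        hs20 hs21 hb2x hb2y hs40 hs41 hb4x hb4y hconv
  · -- u = 0 : contradicts hdiag
    exfalso
    obtain ⟨h0, h1⟩ := sq2_zero hS.symm.le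
    have h2 : (r1 0 - q 0)^2 + (r1 1 - q 1)^2 = 0 := by
      rw [show r1 0 - q 0 = -(q 0 - r1 0) by ring, h0,
          show r1 1 - q 1 = -(q 1 - r1 1) by ring, h1]; norm_num
    rw [h2] at hsq
    obtain ⟨hw0, hw1⟩ := sq2_zero (le_of_eq hsq.symm)
    apply hdiagc
    linear_combination (-(r3 0 - r1 0))*hw0 - (r3 1 - r1 1)*hw1

end
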